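/- For n ≥ 2, the real Lie algebra su(n) of traceless skew-Hermitian complex n×n matrices (viewed as a real Lie algebra with bracket the matrix commutator) has no essential elements. -/

import Mathlib

open Matrix

attribute [local instance 100] LieRing.ofAssociativeRing

/-- The linear span of all brackets `⁅a, b⁆` with `a ∈ A`, `b ∈ B`. -/
def bracketSpan {L : Type*} [LieRing L] [LieAlgebra ℝ L] (A B : Submodule ℝ L) :
    Submodule ℝ L :=
  Submodule.span ℝ {x | ∃ a ∈ A, ∃ b ∈ B, x = ⁅a, b⁆}

/-- `m` is essential: `ad m` is diagonalizable over `ℝ` and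
`ℝ·m + [m,g] + [[m,g],[m,g]] = g`. -/
def Essential {L : Type*} [LieRing L] [LieAlgebra ℝ L] (m : L) : Prop :=
  (⨆ c : ℝ, (LieAlgebra.ad ℝ L m).eigenspace c) = ⊤ ∧
    Submodule.span ℝ {m} ⊔ LinearMap.range (LieAlgebra.ad ℝ L m) ⊔
      bracketSpan (LinearMap.range (LieAlgebra.ad ℝ L m))
        (LinearMap.range (LieAlgebra.ad ℝ L m)) = ⊤

/-- `su(n)`: the real Lie algebra of traceless skew-Hermitian complex `n × n` matrices. -/
def suLie (n : ℕ) : LieSubalgebra ℝ (Matrix (Fin n) (Fin n) ℂ) where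
  carrier := {X | Xᴴ = -X ∧ X.trace = 0}
  zero_mem' := by simp
  add_mem' := by
    rintro a b ⟨ha1, ha2⟩ ⟨hb1, hb2⟩
    refine ⟨?_, ?_⟩
    · rw [conjTranspose_add, ha1, hb1, neg_add]
    · rw [trace_add, ha2, hb2, add_zero]
  smul_mem' := by
    rintro r X ⟨hX1, hX2⟩
    refine ⟨?_, ?_⟩
    · rw [conjTranspose_smul, star_trivial, hX1, smul_neg]
    · rw [trace_smul, hX2, smul_zero]
  lie_mem' := by
    rintro X Y ⟨hX1, _⟩ ⟨hY1, _⟩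
    refine ⟨?_, ?_⟩
    · rw [Ring.lie_def, conjTranspose_sub, conjTranspose_mul, conjTranspose_mul,
        hX1, hY1, neg_mul_neg, neg_mul_neg, neg_sub]
    · rw [Ring.lie_def, trace_sub, trace_mul_comm, sub_self]

lemma trace_conjTranspose_mul_self_eq_zero_imp {n : ℕ} (x : Matrix (Fin n) (Fin n) ℂ)
    (h : (xᴴ * x).trace = 0) : x = 0 := by
  have h' : (xᴴ * x).trace = ((∑ j, ∑ k, Complex.normSq (x k j) : ℝ) : ℂ) := by
    simp only [Matrix.trace, Matrix.diag, Matrix.mul_apply, Matrix.conjTranspose_apply]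
    push_cast
    refine Finset.sum_congr rfl fun j _ => Finset.sum_congr rfl fun k _ => ?_
    rw [show (star (x k j)) = (starRingEnd ℂ) (x k j) from rfl, ← Complex.normSq_eq_conj_mul_self]
  rw [h'] at h
  have h2 : (∑ j, ∑ k, Complex.normSq (x k j) : ℝ) = 0 := by exact_mod_cast h
  ext k j
  have := (Finset.sum_eq_zero_iff_of_nonneg (fun j _ =>
    Finset.sum_nonneg fun k _ => Complex.normSq_nonneg _)).mp h2 j (Finset.mem_univ j)
  have := (Finset.sum_eq_zero_iff_of_nonneg (fun k _ =>
    Complex.normSq_nonneg _)).mp this k (Finset.mem_univ k)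
  simpa using Complex.normSq_eq_zero.mp this

/-- A real eigenvector of `ad m` with nonzero eigenvalue is zero, for skew-Hermitian `m`. -/
lemma eigen_zero {n : ℕ} (c : ℝ) (hc : c ≠ 0) (m x : Matrix (Fin n) (Fin n) ℂ)
    (hm : mᴴ = -m) (hx : m * x - x * m = c • x) : x = 0 := by
  apply trace_conjTranspose_mul_self_eq_zero_imp
  have hconj := congrArg Matrix.conjTranspose hx
  simp only [conjTranspose_sub, conjTranspose_mul, hm, conjTranspose_smul,
    star_trivial] at hconj
  have hx' : m * xᴴ - xᴴ * m = c • xᴴ := by rw [← hconj]; noncomm_ring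
  have h1 : (xᴴ * (m * x)).trace - (xᴴ * (x * m)).trace = c • (xᴴ * x).trace := by
    have := congrArg (fun M => (xᴴ * M).trace) hx
    simpa [mul_sub, trace_sub, Matrix.mul_smul, trace_smul] using this
  have h2 : ((m * xᴴ) * x).trace - ((xᴴ * m) * x).trace = c • (xᴴ * x).trace := by
    have := congrArg (fun M => (M * x).trace) hx'
    simpa [sub_mul, trace_sub, Matrix.smul_mul, trace_smul] using this
  have e1 : (xᴴ * (m * x)).trace = ((xᴴ * m) * x).trace := by rw [mul_assoc]
  have e2 : ((m * xᴴ) * x).trace = (xᴴ * (x * m)).trace := by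
    rw [mul_assoc, trace_mul_comm, mul_assoc]
  rw [e1] at h1
  rw [e2] at h2
  rw [Complex.real_smul] at h1 h2
  have h2c : ((c : ℂ)) ≠ 0 := by exact_mod_cast hc
  have hsum : (c : ℂ) * ((xᴴ * x).trace + (xᴴ * x).trace) = 0 := by
    linear_combination -h1 - h2
  have := (mul_eq_zero.mp hsum).resolve_left h2c
  have h2T : (2 : ℂ) * (xᴴ * x).trace = 0 := by rw [two_mul]; exact this
  exact (mul_eq_zero.mp h2T).resolve_left two_ne_zero

lemma stdBasis_conjT {n : ℕ} (i j : Fin n) (c : ℂ) :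
    (single i j c)ᴴ = single j i (star c) := by
  ext a b
  simp only [conjTranspose_apply, single, Matrix.of_apply, apply_ite, star_zero]
  by_cases h1 : i = b <;> by_cases h2 : j = a <;> simp [h1, h2, and_comm]

lemma stdBasis_trace {n : ℕ} (i j : Fin n) (hij : i ≠ j) (c : ℂ) :
    (single i j c).trace = 0 := by
  simp only [Matrix.trace, Matrix.diag, single, Matrix.of_apply]
  refine Finset.sum_eq_zero fun a _ => ?_
  rw [if_neg]
  rintro ⟨rfl, rfl⟩
  exact hij rfl

theorem suLie_no_essential (n : ℕ) (hn : 2 ≤ n) : ∀ m : suLie n, ¬ Essential m := by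
  rintro m ⟨hd, hs⟩
  -- Step 1: ad m = 0
  have hker : LinearMap.ker (LieAlgebra.ad ℝ (suLie n) m) = ⊤ := by
    rw [eq_top_iff, ← hd]
    refine iSup_le fun c => ?_
    rcases eq_or_ne c 0 with rfl | hc
    · rw [Module.End.eigenspace_zero]
    · intro x hx
      rw [Module.End.mem_eigenspace_iff] at hx
      have hmat : (m : Matrix (Fin n) (Fin n) ℂ) * x - (x : Matrix (Fin n) (Fin n) ℂ) * m
          = c • (x : Matrix (Fin n) (Fin n) ℂ) := by
        have := congrArg Subtype.val hx
        simpa [LieAlgebra.ad_apply, Ring.lie_def] using this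
      have hx0 : (x : Matrix (Fin n) (Fin n) ℂ) = 0 :=
        eigen_zero c hc _ _ m.2.1 hmat
      have : x = 0 := Subtype.ext hx0
      simp [LinearMap.mem_ker, this]
  have had : LieAlgebra.ad ℝ (suLie n) m = 0 := LinearMap.ker_eq_top.mp hker
  rw [had, LinearMap.range_zero] at hs
  have hbs : bracketSpan (⊥ : Submodule ℝ (suLie n)) ⊥ = ⊥ := by
    rw [eq_bot_iff, bracketSpan, Submodule.span_le]
    rintro x ⟨a, ha, b, hb, rfl⟩
    simp only [Submodule.mem_bot] at ha
    simp [ha]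
  rw [hbs] at hs
  simp only [sup_bot_eq] at hs
  -- Step 2: span{m} = ⊤ is impossible since su(n) has dimension > 1
  have h01 : (0 : ℕ) < n := by omega
  have h11 : (1 : ℕ) < n := by omega
  set i0 : Fin n := ⟨0, h01⟩ with hi0
  set i1 : Fin n := ⟨1, h11⟩ with hi1
  have hne : i0 ≠ i1 := by simp [hi0, hi1, Fin.ext_iff]
  set Bmat : Matrix (Fin n) (Fin n) ℂ :=
    single i0 i1 1 - single i1 i0 1 with hBdef
  set Cmat : Matrix (Fin n) (Fin n) ℂ :=
    Complex.I • (single i0 i1 1 + single i1 i0 1) with hCdef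
  have hB : Bmat ∈ suLie n := by
    constructor
    · rw [hBdef, conjTranspose_sub, stdBasis_conjT, stdBasis_conjT]
      simp [neg_sub]
    · rw [hBdef, trace_sub, stdBasis_trace _ _ hne, stdBasis_trace _ _ hne.symm, sub_zero]
  have hC : Cmat ∈ suLie n := by
    constructor
    · rw [hCdef, conjTranspose_smul, conjTranspose_add, stdBasis_conjT, stdBasis_conjT]
      simp [add_comm, Complex.star_def, Complex.conj_I]
    · rw [hCdef, trace_smul, trace_add, stdBasis_trace _ _ hne,
        stdBasis_trace _ _ hne.symm, add_zero, smul_zero]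
  have hBm : (⟨Bmat, hB⟩ : suLie n) ∈ Submodule.span ℝ {m} := hs ▸ Submodule.mem_top
  have hCm : (⟨Cmat, hC⟩ : suLie n) ∈ Submodule.span ℝ {m} := hs ▸ Submodule.mem_top
  obtain ⟨r, hr⟩ := Submodule.mem_span_singleton.mp hBm
  obtain ⟨t, ht⟩ := Submodule.mem_span_singleton.mp hCm
  have hentB : Bmat i0 i1 = 1 := by
    rw [hBdef]
    simp [single_apply_same, single_apply_of_ne, hne,
      fun h : i1 = i0 => hne h.symm]
  have hentC : Cmat i0 i1 = Complex.I := by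
    rw [hCdef]
    simp [single_apply_same, single_apply_of_ne, hne,
      fun h : i1 = i0 => hne h.symm]
  have hr' : (r : ℂ) * (m : Matrix (Fin n) (Fin n) ℂ) i0 i1 = 1 := by
    have := congrFun (congrFun (congrArg Subtype.val hr) i0) i1
    simpa [Matrix.smul_apply, Complex.real_smul, hentB] using this
  have ht' : (t : ℂ) * (m : Matrix (Fin n) (Fin n) ℂ) i0 i1 = Complex.I := by
    have := congrFun (congrFun (congrArg Subtype.val ht) i0) i1
    simpa [Matrix.smul_apply, Complex.real_smul, hentC] using this
  have key : (t : ℂ) = (r : ℂ) * Complex.I := by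
    calc (t : ℂ) = t * ((r : ℂ) * (m : Matrix (Fin n) (Fin n) ℂ) i0 i1) := by
          rw [hr', mul_one]
      _ = r * ((t : ℂ) * (m : Matrix (Fin n) (Fin n) ℂ) i0 i1) := by ring
      _ = r * Complex.I := by rw [ht']
  have him := congrArg Complex.im key
  simp only [Complex.ofReal_im, Complex.mul_im, Complex.I_im, Complex.I_re,
    Complex.ofReal_re, mul_one, mul_zero, add_zero, zero_add] at him
  rw [← him] at hr'
  simp at hr'
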